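/- Let λ₂ > 0, λ₁ ≥ 0, c ∈ ℝ, p₀ ∈ ℝ, and t ≥ 0. Define z = −c/(2λ₂) and the soft-thresholding operator S_τ(u) = sign(u)·max(|u| − τ, 0). Then the function g(q) = c·q + λ₁|q − p₀| + λ₂q² has a unique minimizer over the interval [0,t], given by q* = clip_{[0,t]}( p₀ + S_{λ₁/(2λ₂)}(z − p₀) ), where clip_{[0,t]}(x) = max(0, min(t, x)). -/

import Mathlib

/-- The soft-thresholding operator `S_τ(u) = sign(u)·max(|u| − τ, 0)`. -/
noncomputable def softThresh (τ u : ℝ) : ℝ := Real.sign u * max (|u| - τ) 0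

lemma softThresh_of_ge (τ u : ℝ) (hτ : 0 ≤ τ) (h : τ ≤ u) : softThresh τ u = u - τ := by
  rcases eq_or_lt_of_le (hτ.trans h) with h0 | h0
  · have hτ0 : τ = 0 := le_antisymm (h0 ▸ h) hτ
    simp [softThresh, ← h0, hτ0]
  · rw [softThresh, Real.sign_of_pos h0, abs_of_pos h0, one_mul,
      max_eq_left (by linarith)]

lemma softThresh_of_le (τ u : ℝ) (hτ : 0 ≤ τ) (h : u ≤ -τ) : softThresh τ u = u + τ := by
  rcases eq_or_lt_of_le (h.trans (neg_nonpos.mpr hτ)) with h0 | h0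
  · have hτ0 : τ = 0 := by nlinarith [h, h0]
    simp [softThresh, h0, hτ0]
  · rw [softThresh, Real.sign_of_neg h0, abs_of_neg h0,
      max_eq_left (by linarith)]
    ring

lemma softThresh_of_abs_le (τ u : ℝ) (h : |u| ≤ τ) : softThresh τ u = 0 := by
  rw [softThresh, max_eq_right (by linarith), mul_zero]

/-- **Closed-form coordinatewise solution of the BEACON weight subproblem.**
For `λ₂ > 0`, `λ₁ ≥ 0`, `t ≥ 0`, with `z = −c/(2λ₂)`, the function
`g(q) = c·q + λ₁|q − p₀| + λ₂q²` has the unique minimizer over `[0,t]` given by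
`q* = clip_{[0,t]}(p₀ + S_{λ₁/(2λ₂)}(z − p₀))`. -/
theorem beacon_weight_subproblem_closed_form
    (lam2 lam1 c p0 t : ℝ) (hlam2 : 0 < lam2) (hlam1 : 0 ≤ lam1) (ht : 0 ≤ t) :
    let g : ℝ → ℝ := fun q => c * q + lam1 * |q - p0| + lam2 * q ^ 2
    let z : ℝ := -c / (2 * lam2)
    let qstar : ℝ := max 0 (min t (p0 + softThresh (lam1 / (2 * lam2)) (z - p0)))
    qstar ∈ Set.Icc 0 t ∧ (∀ q ∈ Set.Icc 0 t, g qstar ≤ g q) ∧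
      (∀ q ∈ Set.Icc 0 t, q ≠ qstar → g qstar < g q) := by
  intro g z qstar
  set τ : ℝ := lam1 / (2 * lam2) with hτdef
  have h2l : (0:ℝ) < 2 * lam2 := by linarith
  have hτ : 0 ≤ τ := div_nonneg hlam1 (by linarith)
  have hcz : 2 * lam2 * z = -c := by
    show 2 * lam2 * (-c / (2 * lam2)) = -c
    field_simp
  have hlτ : lam1 = 2 * lam2 * τ := by
    rw [hτdef]
    field_simp
  have hmem : qstar ∈ Set.Icc 0 t :=
    ⟨le_max_left _ _, max_le ht (min_le_left _ _)⟩
  have hkey : ∀ q ∈ Set.Icc (0:ℝ) t,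
      0 ≤ (c + 2 * lam2 * qstar) * (q - qstar) + lam1 * (|q - p0| - |qstar - p0|) := by
    intro q hq
    obtain ⟨hq0, hqt⟩ := hq
    rcases le_total τ (z - p0) with h1 | h1
    · -- soft-threshold: w = z - p0 - τ, so y = z - τ
      have hw : softThresh τ (z - p0) = z - p0 - τ := softThresh_of_ge τ _ hτ h1
      have hy : p0 + softThresh τ (z - p0) = z - τ := by rw [hw]; ring
      rcases le_or_gt (z - τ) 0 with hy0 | hy0
      · -- q* = 0
        have hqs : qstar = 0 := by
          rw [show qstar = max 0 (min t (p0 + softThresh τ (z - p0))) from rfl, hy,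
            min_eq_right (hy0.trans ht), max_eq_left hy0]
        have hp0 : p0 ≤ 0 := by linarith
        rw [hqs]
        rw [abs_of_nonneg (by linarith : 0 ≤ q - p0),
          abs_of_nonneg (by linarith : (0:ℝ) ≤ 0 - p0)]
        nlinarith [mul_nonneg (mul_nonneg h2l.le (by linarith : 0 ≤ τ - z)) hq0]
      · rcases le_total t (z - τ) with hyt | hyt
        · -- q* = t
          have hqs : qstar = t := by
            rw [show qstar = max 0 (min t (p0 + softThresh τ (z - p0))) from rfl, hy,
              min_eq_left hyt, max_eq_right ht]
          rw [hqs]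
          have h3 : |t - p0| - |q - p0| ≤ t - q := by
            have h4 := abs_sub_abs_le_abs_sub (t - p0) (q - p0)
            rw [show (t - p0) - (q - p0) = t - q by ring,
              abs_of_nonneg (by linarith : 0 ≤ t - q)] at h4
            exact h4
          nlinarith [mul_nonneg (by linarith : 0 ≤ t - q)
              (mul_nonneg h2l.le (by linarith : 0 ≤ z - τ - t)),
            mul_nonneg hlam1 (by linarith : 0 ≤ (t - q) - (|t - p0| - |q - p0|))]
        · -- q* = z - τ (interior)
          have hqs : qstar = z - τ := by
            rw [show qstar = max 0 (min t (p0 + softThresh τ (z - p0))) from rfl, hy,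
              min_eq_right hyt, max_eq_right hy0.le]
          rw [hqs, abs_of_nonneg (by linarith : 0 ≤ z - τ - p0)]
          nlinarith [mul_nonneg hlam1 (sub_nonneg.2 (le_abs_self (q - p0)))]
    · rcases le_total (z - p0) (-τ) with h2 | h2
      · -- w = z - p0 + τ, y = z + τ, p0 ≥ z + τ
        have hw : softThresh τ (z - p0) = z - p0 + τ := softThresh_of_le τ _ hτ h2
        have hy : p0 + softThresh τ (z - p0) = z + τ := by rw [hw]; ring
        have hp0y : z + τ ≤ p0 := by linarith
        rcases le_or_gt (z + τ) 0 with hy0 | hy0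
        · -- q* = 0, c ≥ λ₁
          have hqs : qstar = 0 := by
            rw [show qstar = max 0 (min t (p0 + softThresh τ (z - p0))) from rfl, hy,
              min_eq_right (hy0.trans ht), max_eq_left hy0]
          rw [hqs]
          have h3 : |0 - p0| - |q - p0| ≤ q := by
            have h4 := abs_sub_abs_le_abs_sub (0 - p0) (q - p0)
            rw [show (0 - p0) - (q - p0) = -q by ring, abs_neg,
              abs_of_nonneg hq0] at h4
            exact h4
          nlinarith [mul_nonneg hq0 (mul_nonneg h2l.le (by linarith : 0 ≤ -τ - z)),
            mul_nonneg hlam1 (by linarith : 0 ≤ q - (|0 - p0| - |q - p0|))]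
        · rcases le_total t (z + τ) with hyt | hyt
          · -- q* = t, p0 ≥ z + τ ≥ t ≥ q
            have hqs : qstar = t := by
              rw [show qstar = max 0 (min t (p0 + softThresh τ (z - p0))) from rfl, hy,
                min_eq_left hyt, max_eq_right ht]
            rw [hqs, abs_of_nonpos (by linarith : q - p0 ≤ 0),
              abs_of_nonpos (by linarith : t - p0 ≤ 0)]
            nlinarith [mul_nonneg (by linarith : 0 ≤ t - q)
              (mul_nonneg h2l.le (by linarith : 0 ≤ τ - (t - z)))]
          · -- q* = z + τ (interior)
            have hqs : qstar = z + τ := by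
              rw [show qstar = max 0 (min t (p0 + softThresh τ (z - p0))) from rfl, hy,
                min_eq_right hyt, max_eq_right hy0.le]
            rw [hqs, abs_of_nonpos (by linarith : z + τ - p0 ≤ 0)]
            nlinarith [mul_nonneg hlam1 (by linarith [neg_abs_le (q - p0)] :
              0 ≤ |q - p0| + (q - p0))]
      · -- |z - p0| ≤ τ, w = 0, y = p0
        have hw : softThresh τ (z - p0) = 0 :=
          softThresh_of_abs_le τ _ (abs_le.mpr ⟨h2, h1⟩)
        have hy : p0 + softThresh τ (z - p0) = p0 := by rw [hw]; ring
        rcases le_or_gt p0 0 with hy0 | hy0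
        · -- q* = 0
          have hqs : qstar = 0 := by
            rw [show qstar = max 0 (min t (p0 + softThresh τ (z - p0))) from rfl, hy,
              min_eq_right (hy0.trans ht), max_eq_left hy0]
          rw [hqs, abs_of_nonneg (by linarith : 0 ≤ q - p0),
            abs_of_nonneg (by linarith : (0:ℝ) ≤ 0 - p0)]
          nlinarith [mul_nonneg hq0 (mul_nonneg h2l.le (by linarith : 0 ≤ τ - z))]
        · rcases le_total t p0 with hyt | hyt
          · -- q* = t, q ≤ t ≤ p0
            have hqs : qstar = t := by
              rw [show qstar = max 0 (min t (p0 + softThresh τ (z - p0))) from rfl, hy,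
                min_eq_left hyt, max_eq_right ht]
            rw [hqs, abs_of_nonpos (by linarith : q - p0 ≤ 0),
              abs_of_nonpos (by linarith : t - p0 ≤ 0)]
            nlinarith [mul_nonneg (by linarith : 0 ≤ t - q)
              (mul_nonneg h2l.le (by linarith : 0 ≤ τ + z - t))]
          · -- q* = p0 (interior)
            have hqs : qstar = p0 := by
              rw [show qstar = max 0 (min t (p0 + softThresh τ (z - p0))) from rfl, hy,
                min_eq_right hyt, max_eq_right hy0.le]
            rw [hqs, sub_self, abs_zero]
            have hb1 : 0 ≤ lam1 - 2 * lam2 * (p0 - z) := by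
              nlinarith [mul_nonneg h2l.le (by linarith : 0 ≤ τ + (z - p0))]
            have hb2 : 0 ≤ lam1 + 2 * lam2 * (p0 - z) := by
              nlinarith [mul_nonneg h2l.le (by linarith : 0 ≤ τ - (z - p0))]
            nlinarith [mul_nonneg hb1
                (by linarith [le_abs_self (q - p0)] : 0 ≤ |q - p0| - (q - p0)),
              mul_nonneg hb2
                (by linarith [neg_abs_le (q - p0)] : 0 ≤ |q - p0| + (q - p0))]
  refine ⟨hmem, ?_, ?_⟩
  · intro q hq
    have h := hkey q hq
    show c * qstar + lam1 * |qstar - p0| + lam2 * qstar ^ 2 ≤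
      c * q + lam1 * |q - p0| + lam2 * q ^ 2
    nlinarith [sq_nonneg (q - qstar), hlam2]
  · intro q hq hne
    have h := hkey q hq
    have hpos : 0 < (q - qstar) ^ 2 := by
      have h0 : q - qstar ≠ 0 := sub_ne_zero.mpr hne
      positivity
    show c * qstar + lam1 * |qstar - p0| + lam2 * qstar ^ 2 <
      c * q + lam1 * |q - p0| + lam2 * q ^ 2
    nlinarith [mul_pos hlam2 hpos]
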